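/- T_H semantically entails H⁺ ≠ H⁻. -/
import Mathlib


open FirstOrder FirstOrder.Language

namespace CoRussellParadox

/-- The language `L'` with a single binary relation symbol `∈` and four constant
symbols `A`, `B`, `H⁺`, `H⁻` (coded as `Fin 4`). -/
def L : Language :=
  ⟨fun n => match n with | 0 => Fin 4 | _ => Empty,
   fun n => match n with | 2 => Unit | _ => Empty⟩

/-- The membership relation symbol. -/
def memRel : L.Relations 2 := Unit.unit

/-- The constant symbol `A`. -/
def cA : L.Constants := (0 : Fin 4)
/-- The constant symbol `B`. -/
def cB : L.Constants := (1 : Fin 4)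
/-- The constant symbol `H⁺`. -/
def cHp : L.Constants := (2 : Fin 4)
/-- The constant symbol `H⁻`. -/
def cHm : L.Constants := (3 : Fin 4)

/-- `memF t₁ t₂` is the atomic formula `t₁ ∈ t₂`. -/
def memF {n : ℕ} (t₁ t₂ : L.Term (Empty ⊕ Fin n)) : L.BoundedFormula Empty n :=
  memRel.boundedFormula₂ t₁ t₂

/-- Inclusion of a term in context `n` into the larger context `n + k`. -/
def tl {n : ℕ} (k : ℕ) (t : L.Term (Empty ⊕ Fin n)) : L.Term (Empty ⊕ Fin (n + k)) :=
  t.relabel (Sum.map id (Fin.castAdd k))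

/-- `z = ⟨a,b⟩` (Kuratowski pair), as the formula
`∃p∃q(∀x(x∈p ↔ x=a) ∧ ∀x(x∈q ↔ (x=a ∨ x=b)) ∧ ∀x(x∈z ↔ (x=p ∨ x=q)))`. -/
def isPairF {n : ℕ} (z a b : L.Term (Empty ⊕ Fin n)) : L.BoundedFormula Empty n :=
  ∃' ∃' (
    (∀' (memF (&⟨n + 2, by omega⟩) (&⟨n, by omega⟩) ⇔
        ((&(⟨n + 2, by omega⟩ : Fin (n + 3))) =' tl 3 a))) ⊓
    (∀' (memF (&⟨n + 2, by omega⟩) (&⟨n + 1, by omega⟩) ⇔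
        (((&(⟨n + 2, by omega⟩ : Fin (n + 3))) =' tl 3 a) ⊔
         ((&(⟨n + 2, by omega⟩ : Fin (n + 3))) =' tl 3 b)))) ⊓
    (∀' (memF (&⟨n + 2, by omega⟩) (tl 3 z) ⇔
        (((&(⟨n + 2, by omega⟩ : Fin (n + 3))) =' (&⟨n, by omega⟩)) ⊔
         ((&(⟨n + 2, by omega⟩ : Fin (n + 3))) =' (&⟨n + 1, by omega⟩))))))

/-- Extensionality: `∀y∀z(∀x(x∈y ↔ x∈z) → y=z)`. -/
def extAx : L.Sentence :=
  ∀' ∀' ((∀' (memF (&2) (&0) ⇔ memF (&2) (&1))) ⟹ ((&0) =' (&1)))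

/-- Pairing: `∀a∀b∃y∀x(x∈y ↔ (x=a ∨ x=b))`. -/
def pairAx : L.Sentence :=
  ∀' ∀' ∃' ∀' (memF (&3) (&2) ⇔ (((&3) =' (&0)) ⊔ ((&3) =' (&1))))

/-- Extracting: `∀a∃y∀x(x∈y ↔ ∃z(z=⟨a,x⟩ ∧ z∈a))`. -/
def extractAx : L.Sentence :=
  ∀' ∃' ∀' (memF (&2) (&1) ⇔ ∃' (isPairF (&3) (&0) (&2) ⊓ memF (&3) (&0)))

/-- `w = v[v]`, i.e. `∀u(u∈w ↔ ∃z(z=⟨v,u⟩ ∧ z∈v))`, here with `v = &1`, `w = &2`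
in context `3` (as used in the axioms for `A` and `B`). -/
def wEqExtractF : L.BoundedFormula Empty 3 :=
  ∀' (memF (&3) (&2) ⇔ ∃' (isPairF (&4) (&1) (&3) ⊓ memF (&4) (&1)))

/-- The axiom `∀x(x∈A ↔ ∃v∃w(x=⟨v,w⟩ ∧ (w∈w ∨ w=v[v])))`. -/
def axA : L.Sentence :=
  ∀' (memF (&0) (Constants.term cA) ⇔
    ∃' ∃' (isPairF (&0) (&1) (&2) ⊓ (memF (&2) (&2) ⊔ wEqExtractF)))

/-- The axiom `∀x(x∈B ↔ ∃v∃w(x=⟨v,w⟩ ∧ (w∈w ∧ ¬w=v[v])))`. -/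
def axB : L.Sentence :=
  ∀' (memF (&0) (Constants.term cB) ⇔
    ∃' ∃' (isPairF (&0) (&1) (&2) ⊓ (memF (&2) (&2) ⊓ ∼wEqExtractF)))

/-- The axiom `∀x(x∈H⁺ ↔ ∃z(z=⟨A,x⟩ ∧ z∈A))`. -/
def axHp : L.Sentence :=
  ∀' (memF (&0) (Constants.term cHp) ⇔
    ∃' (isPairF (&1) (Constants.term cA) (&0) ⊓ memF (&1) (Constants.term cA)))

/-- The axiom `∀x(x∈H⁻ ↔ ∃z(z=⟨B,x⟩ ∧ z∈B))`. -/
def axHm : L.Sentence :=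
  ∀' (memF (&0) (Constants.term cHm) ⇔
    ∃' (isPairF (&1) (Constants.term cB) (&0) ⊓ memF (&1) (Constants.term cB)))

/-- The theory `T_H`: extensionality, pairing, extracting, and the defining axioms
of `A`, `B`, `H⁺` and `H⁻`. -/
def TH : L.Theory := {extAx, pairAx, extractAx, axA, axB, axHp, axHm}


section ModelLemmas

variable {M : Type*} [L.Structure M]

/-- Membership in the model. -/
def mem (x y : M) : Prop := Structure.RelMap memRel ![x, y]

/-- `z` is the Kuratowski pair of `a` and `b` in the model. -/
def IsPr (z a b : M) : Prop :=
  ∃ p q : M, (∀ x, mem x p ↔ x = a) ∧ (∀ x, mem x q ↔ x = a ∨ x = b) ∧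
    (∀ x, mem x z ↔ x = p ∨ x = q)

@[simp] lemma funMap_const (c : L.Constants) (x : Fin 0 → M) :
    Structure.funMap c x = (c : M) := by
  rw [show x = default from Subsingleton.elim _ _]; rfl

lemma realize_extAx (h : M ⊨ extAx) :
    ∀ y z : M, (∀ x : M, mem x y ↔ mem x z) → y = z := by
  simp [extAx, memF, Sentence.Realize, Formula.Realize, Fin.snoc, mem] at h ⊢
  exact h

lemma realize_pairAx (h : M ⊨ pairAx) :
    ∀ a b : M, ∃ y : M, ∀ x, mem x y ↔ x = a ∨ x = b := by
  simp [pairAx, memF, Sentence.Realize, Formula.Realize, Fin.snoc, mem] at h ⊢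
  exact h

lemma realize_axHp (h : M ⊨ axHp) :
    ∀ x : M, mem x (cHp : M) ↔ ∃ z : M, IsPr z (cA : M) x ∧ mem z (cA : M) := by
  simp (config := {decide := true}) [axHp, memF, isPairF, tl, Sentence.Realize, Formula.Realize, Fin.snoc, mem, IsPr, and_assoc] at h ⊢
  exact h

lemma realize_axHm (h : M ⊨ axHm) :
    ∀ x : M, mem x (cHm : M) ↔ ∃ z : M, IsPr z (cB : M) x ∧ mem z (cB : M) := by
  simp (config := {decide := true}) [axHm, memF, isPairF, tl, Sentence.Realize, Formula.Realize, Fin.snoc, mem, IsPr, and_assoc] at h ⊢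
  exact h

lemma realize_axA (h : M ⊨ axA) :
    ∀ x : M, mem x (cA : M) ↔ ∃ v w : M, IsPr x v w ∧
      (mem w w ∨ ∀ u : M, mem u w ↔ ∃ z : M, IsPr z v u ∧ mem z v) := by
  simp (config := {decide := true}) [axA, memF, isPairF, wEqExtractF, tl, Sentence.Realize, Formula.Realize, Fin.snoc,
    mem, IsPr, and_assoc] at h ⊢
  exact h

lemma realize_axB (h : M ⊨ axB) :
    ∀ x : M, mem x (cB : M) ↔ ∃ v w : M, IsPr x v w ∧
      (mem w w ∧ ¬ ∀ u : M, mem u w ↔ ∃ z : M, IsPr z v u ∧ mem z v) := by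
  simp (config := {decide := true}) [axB, memF, isPairF, wEqExtractF, tl, Sentence.Realize, Formula.Realize, Fin.snoc,
    mem, IsPr, and_assoc] at h ⊢
  exact h

end ModelLemmas


section Main

variable {M : Type*} [L.Structure M]

lemma exists_IsPr (hpair : ∀ a b : M, ∃ y, ∀ x, mem x y ↔ x = a ∨ x = b) (a b : M) :
    ∃ z : M, IsPr z a b := by
  obtain ⟨p, hp⟩ := hpair a a
  obtain ⟨q, hq⟩ := hpair a b
  obtain ⟨z, hz⟩ := hpair p q
  exact ⟨z, p, q, fun x => by simpa using hp x, hq, hz⟩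

lemma IsPr_inj {z a b v w : M} (h1 : IsPr z a b) (h2 : IsPr z v w) : a = v ∧ b = w := by
  obtain ⟨p, q, hp, hq, hz⟩ := h1
  obtain ⟨p', q', hp', hq', hz'⟩ := h2
  have hpz : mem p z := (hz p).2 (Or.inl rfl)
  have hqz : mem q z := (hz q).2 (Or.inr rfl)
  have hap : mem a p := (hp a).2 rfl
  have hbq : mem b q := (hq b).2 (Or.inr rfl)
  have hvq' : mem v q' := (hq' v).2 (Or.inl rfl)
  have hwq' : mem w q' := (hq' w).2 (Or.inr rfl)
  rcases (hz' p).1 hpz with hpp' | hpq'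
  · -- p = p'
    have hav : a = v := by rw [hpp'] at hap; exact (hp' a).1 hap
    rcases (hz' q).1 hqz with hqp' | hqq'
    · -- q = p'
      have hbv : b = v := by rw [hqp'] at hbq; exact (hp' b).1 hbq
      have hq'z : mem q' z := (hz' q').2 (Or.inr rfl)
      rcases (hz q').1 hq'z with h1 | h1
      · have hwa : w = a := by rw [h1] at hwq'; exact (hp w).1 hwq'
        exact ⟨hav, by rw [hbv, ← hav, ← hwa]⟩
      · rw [h1] at hwq'
        rcases (hq w).1 hwq' with h2 | h2
        · exact ⟨hav, by rw [hbv, ← hav, ← h2]⟩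
        · exact ⟨hav, h2.symm⟩
    · -- q = q'
      rw [hqq'] at hbq
      rcases (hq' b).1 hbq with h1 | h1
      · rw [← hqq'] at hwq'
        rcases (hq w).1 hwq' with h2 | h2
        · exact ⟨hav, by rw [h1, ← hav, ← h2]⟩
        · exact ⟨hav, h2.symm⟩
      · exact ⟨hav, h1⟩
  · -- p = q'
    have hva : v = a := by rw [← hpq'] at hvq'; exact (hp v).1 hvq'
    have hwa : w = a := by rw [← hpq'] at hwq'; exact (hp w).1 hwq'
    rcases (hz' q).1 hqz with h1 | h1
    · -- q = p'
      have hbv : b = v := by rw [h1] at hbq; exact (hp' b).1 hbq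
      exact ⟨hva.symm, by rw [hbv, hva, ← hwa]⟩
    · -- q = q'
      rw [h1] at hbq
      rcases (hq' b).1 hbq with h2 | h2
      · exact ⟨hva.symm, by rw [h2, hva, ← hwa]⟩
      · exact ⟨hva.symm, h2⟩

end Main

/-- `T_H` semantically entails `H⁺ ≠ H⁻`. -/
theorem TH_Hp_ne_Hm :
    TH ⊨ᵇ ((∼((Constants.term cHp : L.Term (Empty ⊕ Fin 0)) =' (Constants.term cHm))) : L.Sentence) := by
  intro M v xs
  have hpair := realize_pairAx (M := M) (TH.realize_sentence_of_mem (by simp [TH]))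
  have hA := realize_axA (M := M) (TH.realize_sentence_of_mem (by simp [TH]))
  have hB := realize_axB (M := M) (TH.realize_sentence_of_mem (by simp [TH]))
  have hHp := realize_axHp (M := M) (TH.realize_sentence_of_mem (by simp [TH]))
  have hHm := realize_axHm (M := M) (TH.realize_sentence_of_mem (by simp [TH]))
  have hpp : mem (cHp : M) (cHp : M) := by
    obtain ⟨z, hz⟩ := exists_IsPr hpair (cA : M) (cHp : M)
    have hzA : mem z (cA : M) := (hA z).2 ⟨(cA : M), (cHp : M), hz, Or.inr (fun u => hHp u)⟩
    exact (hHp (cHp : M)).2 ⟨z, hz, hzA⟩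
  have hmm : ¬ mem (cHm : M) (cHm : M) := by
    intro h
    obtain ⟨z, hz, hzB⟩ := (hHm (cHm : M)).1 h
    obtain ⟨v', w', hz', hww, hne⟩ := (hB z).1 hzB
    obtain ⟨hv, hw⟩ := IsPr_inj hz hz'
    subst hv
    subst hw
    exact hne (fun u => hHm u)
  have hne : (cHp : M) ≠ (cHm : M) := by
    intro h
    rw [h] at hpp
    exact hmm hpp
  simpa [Sentence.Realize, Formula.Realize, mem] using hne


end CoRussellParadox
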